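/- Let F be a thin family of finite subsets of ℕ. Then for every finite partition F = F₁ ∪ … ∪ F_k (k ≥ 2) of F and every M ∈ [ℕ]^∞ there exist L ∈ [M]^∞ and 1 ≤ i₀ ≤ k such that F↾L ⊆ F_{i₀}. -/

import Mathlib

open Set Filter

namespace HOSM

/-- `t` is an initial segment of the finite set `s` (w.r.t. the increasing enumerations). -/
def InitSeg (t s : Finset ℕ) : Prop :=
  t ⊆ s ∧ ∀ a ∈ s, ∀ b ∈ t, a ≤ b → a ∈ t

/-- `t` is a proper initial segment of `s`. -/
def ProperInitSeg (t s : Finset ℕ) : Prop := InitSeg t s ∧ t ≠ s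

/-- The initial-segment closure `F̂` of a family `F`. -/
def hat (F : Set (Finset ℕ)) : Set (Finset ℕ) := {t | ∃ s ∈ F, InitSeg t s}

/-- The restriction `F↾L = {s ∈ F : s ⊆ L}`. -/
def restrict (F : Set (Finset ℕ)) (L : Set ℕ) : Set (Finset ℕ) :=
  {s | s ∈ F ∧ (s : Set ℕ) ⊆ L}

/-- `F` is hereditary: it contains all subsets of its members. -/
def Hereditary (F : Set (Finset ℕ)) : Prop := ∀ s ∈ F, ∀ t ⊆ s, t ∈ F

/-- `elt s k` is the `k`-th smallest element of `s` (0-indexed; junk value `0` out of range). -/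
def elt (s : Finset ℕ) (k : ℕ) : ℕ := (s.sort (· ≤ ·)).getD k 0

/-- `F` is spreading. -/
def Spreading (F : Set (Finset ℕ)) : Prop :=
  ∀ s ∈ F, ∀ t : Finset ℕ, t.card = s.card → (∀ k < s.card, elt s k ≤ elt t k) → t ∈ F

/-- The characteristic function of a finite set, as an element of `{0,1}^ℕ`. -/
def chi (s : Finset ℕ) : ℕ → Bool := fun n => decide (n ∈ s)

/-- `F` is compact: the set of characteristic functions of its members is closed in `{0,1}^ℕ`. -/
def CompactFam (F : Set (Finset ℕ)) : Prop := IsClosed (chi '' F)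

/-- `F` is regular: compact, hereditary and spreading. -/
def RegularFam (F : Set (Finset ℕ)) : Prop := CompactFam F ∧ Hereditary F ∧ Spreading F

/-- `F` is thin: no member is a proper initial segment of another member. -/
def Thin (F : Set (Finset ℕ)) : Prop := ∀ s ∈ F, ∀ t ∈ F, ¬ ProperInitSeg t s

/-- `F` is regular thin: thin, and its closure `F̂` is regular. -/
def RegularThin (F : Set (Finset ℕ)) : Prop := Thin F ∧ RegularFam (hat F)

/-- The relation on finite sets: `extRel F t s` iff `t ∈ F̂` and `s` is a proper initial
segment of `t`.  Rank with respect to it computes the order `o_{F̂}`. -/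
def extRel (F : Set (Finset ℕ)) (t s : Finset ℕ) : Prop := t ∈ hat F ∧ ProperInitSeg s t

open scoped Classical in
/-- The order `o(F)` of a family: the ordinal rank of the tree `F̂` at `∅`
(junk value `0` if `F̂` is ill-founded). -/
noncomputable def famOrder (F : Set (Finset ℕ)) : Ordinal :=
  if h : Acc (extRel F) (∅ : Finset ℕ) then h.rank else 0

/-- `nth L k` is the `k`-th smallest element of the set `L` (0-indexed). -/
noncomputable def nth (L : Set ℕ) (k : ℕ) : ℕ := Nat.nth (· ∈ L) k

/-- `L(s) = {L(k) : k ∈ s}` for a finite set `s`. -/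
noncomputable def mapSet (L : Set ℕ) (s : Finset ℕ) : Finset ℕ := s.image (nth L)

/-- An `l`-tuple of nonempty finite subsets of `ℕ` is a plegma family. -/
def IsPlegma {l : ℕ} (s : Fin l → Finset ℕ) : Prop :=
  (∀ i, (s i).Nonempty) ∧
  (∀ i j : Fin l, i < j → ∀ k, k < (s i).card → k < (s j).card →
      elt (s i) k < elt (s j) k) ∧
  (∀ i j : Fin l, ∀ k, k < (s i).card → k + 1 < (s j).card →
      elt (s i) k < elt (s j) (k + 1))

/-- A plegma pair. -/
def IsPlegmaPair (s t : Finset ℕ) : Prop := IsPlegma ![s, t]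

/-- `Plm l G`: the set of plegma `l`-tuples with members in `G`. -/
def Plm (l : ℕ) (G : Set (Finset ℕ)) : Set (Fin l → Finset ℕ) :=
  {s | IsPlegma s ∧ ∀ i, s i ∈ G}

/-- `s` is an initial segment of the infinite set `N`. -/
def InitSegOfInf (s : Finset ℕ) (N : Set ℕ) : Prop :=
  (s : Set ℕ) ⊆ N ∧ ∀ a ∈ N, ∀ b ∈ s, a ≤ b → a ∈ s

/-- `F` is very large in `M`: every infinite subset of `M` has an initial segment in `F`. -/
def VeryLarge (F : Set (Finset ℕ)) (M : Set ℕ) : Prop :=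
  ∀ N : Set ℕ, N ⊆ M → N.Infinite → ∃ s ∈ F, InitSegOfInf s N

/-- `F↾↾L`. -/
def restrict2 (F : Set (Finset ℕ)) (L : Set ℕ) : Set (Finset ℕ) :=
  {s | s ∈ restrict F L ∧ ∀ j, j + 1 < s.card → ∃ l ∈ L, elt s j < l ∧ l < elt s (j + 1)}

/-- `φ` is plegma preserving on `D`. -/
def PlegmaPreserving (D : Set (Finset ℕ)) (φ : Finset ℕ → Finset ℕ) : Prop :=
  ∀ s₁ ∈ D, ∀ s₂ ∈ D, IsPlegmaPair s₁ s₂ → IsPlegmaPair (φ s₁) (φ s₂)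

end HOSM

open HOSM
namespace NWAux

open Set

/-- `L` accepts `s` (w.r.t. the family `S`). -/
def acc (S : Set (Finset ℕ)) (s : Finset ℕ) (L : Set ℕ) : Prop :=
  ∀ N : Set ℕ, N ⊆ L → N.Infinite → (∀ n ∈ N, ∀ m ∈ s, m < n) →
    ∃ t ∈ S, InitSegOfInf t (↑s ∪ N)

/-- `L` rejects `s`: no infinite subset of `L` accepts `s`. -/
def rej (S : Set (Finset ℕ)) (s : Finset ℕ) (L : Set ℕ) : Prop :=
  ∀ L', L' ⊆ L → L'.Infinite → ¬ acc S s L'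

lemma acc_mono {S : Set (Finset ℕ)} {s : Finset ℕ} {L L' : Set ℕ} (h : L' ⊆ L)
    (ha : acc S s L) : acc S s L' :=
  fun N hN => ha N (hN.trans h)

lemma rej_mono {S : Set (Finset ℕ)} {s : Finset ℕ} {L L' : Set ℕ} (h : L' ⊆ L)
    (hr : rej S s L) : rej S s L' :=
  fun N hN => hr N (hN.trans h)

lemma tail_infinite {L : Set ℕ} (hL : L.Infinite) (c : ℕ) : (L ∩ Ioi c).Infinite := by
  have : L ∩ Ioi c = L \ Iic c := by ext x; simp [not_le]
  rw [this]
  exact hL.diff (finite_Iic c)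

lemma finset_bound (s : Finset ℕ) : ∃ c, ∀ m ∈ s, m ≤ c :=
  ⟨s.sup id, fun m hm => Finset.le_sup (f := id) hm⟩

lemma decide (S : Set (Finset ℕ)) (s : Finset ℕ) (L : Set ℕ) (hL : L.Infinite) :
    ∃ L', L' ⊆ L ∧ L'.Infinite ∧ (acc S s L' ∨ rej S s L') := by
  by_cases h : ∃ L', L' ⊆ L ∧ L'.Infinite ∧ acc S s L'
  · obtain ⟨L', h1, h2, h3⟩ := h; exact ⟨L', h1, h2, Or.inl h3⟩
  · exact ⟨L, subset_rfl, hL, Or.inr (fun L' h1 h2 h3 => h ⟨L', h1, h2, h3⟩)⟩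

lemma decide_many (S : Set (Finset ℕ)) (T : Finset (Finset ℕ)) :
    ∀ L : Set ℕ, L.Infinite →
    ∃ L', L' ⊆ L ∧ L'.Infinite ∧ ∀ s ∈ T, acc S s L' ∨ rej S s L' := by
  classical
  induction T using Finset.induction_on with
  | empty => exact fun L hL => ⟨L, subset_rfl, hL, by simp⟩
  | insert _ _ ha ih =>
    rename_i a T'
    intro L hL
    obtain ⟨L₁, h1, h2, h3⟩ := ih L hL
    obtain ⟨L₂, g1, g2, g3⟩ := decide S a L₁ h2
    refine ⟨L₂, g1.trans h1, g2, ?_⟩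
    intro s hs
    rcases Finset.mem_insert.1 hs with rfl | hs
    · exact g3
    · rcases h3 s hs with h | h
      · exact Or.inl (acc_mono g1 h)
      · exact Or.inr (rej_mono g1 h)

lemma chain_exists {α : Type*} (Inv : α → Prop) (Rel : α → α → Prop) (a₀ : α) (h₀ : Inv a₀)
    (step : ∀ a, Inv a → ∃ b, Inv b ∧ Rel a b) :
    ∃ f : ℕ → α, f 0 = a₀ ∧ (∀ i, Inv (f i)) ∧ ∀ i, Rel (f i) (f (i + 1)) := by
  choose g hg1 hg2 using step
  let f : ℕ → {a // Inv a} := fun i =>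
    Nat.rec ⟨a₀, h₀⟩ (fun _ p => ⟨g p.1 p.2, hg1 p.1 p.2⟩) i
  exact ⟨fun i => (f i).1, rfl, fun i => (f i).2, fun i => hg2 (f i).1 (f i).2⟩

/-- Two finite initial segments of the same infinite set are comparable. -/
lemma initSeg_comparable {N : Set ℕ} {s t : Finset ℕ}
    (hs : InitSegOfInf s N) (ht : InitSegOfInf t N) : s ⊆ t ∨ t ⊆ s := by
  by_cases h : s ⊆ t
  · exact Or.inl h
  · right
    obtain ⟨b, hb, hbt⟩ := Finset.not_subset.1 h
    intro a ha
    rcases le_or_gt a b with hab | hba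
    · exact hs.2 a (ht.1 ha) b hb hab
    · exact absurd (ht.2 b (hs.1 hb) a ha hba.le) hbt

lemma finset_initSeg {N : Set ℕ} {s t : Finset ℕ} (hs : InitSegOfInf s N)
    (ht : InitSegOfInf t N) (hst : t ⊆ s) : InitSeg t s :=
  ⟨hst, fun a ha b hb hab => ht.2 a (hs.1 ha) b hb hab⟩

/-- Thinness: two members of `F` which are both initial segments of `N` coincide. -/
lemma thin_initSeg_eq {F : Set (Finset ℕ)} (hF : Thin F) {N : Set ℕ} {s t : Finset ℕ}
    (hsF : s ∈ F) (htF : t ∈ F) (hs : InitSegOfInf s N) (ht : InitSegOfInf t N) : s = t := by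
  rcases initSeg_comparable hs ht with h | h
  · by_contra hne
    exact hF t htF s hsF ⟨finset_initSeg ht hs h, hne⟩
  · by_contra hne
    exact hF s hsF t htF ⟨finset_initSeg hs ht h, fun e => hne e.symm⟩

end NWAux
namespace NWAux
open Set

lemma fusion (S : Set (Finset ℕ)) (M : Set ℕ) (hM : M.Infinite) :
    ∃ L, L ⊆ M ∧ L.Infinite ∧ ∀ s : Finset ℕ, ↑s ⊆ L → ∀ c : ℕ, (∀ m ∈ s, m ≤ c) →
      acc S s (L ∩ Ioi c) ∨ rej S s (L ∩ Ioi c) := by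
  classical
  -- states: (finite set of chosen points, current infinite reservoir)
  set Inv : Finset ℕ × Set ℕ → Prop := fun σ =>
    σ.2.Infinite ∧ ↑σ.1 ⊆ M ∧ σ.2 ⊆ M ∧ (∀ x ∈ σ.2, ∀ m ∈ σ.1, m < x) ∧
      (∀ s ∈ σ.1.powerset, acc S s σ.2 ∨ rej S s σ.2) with hInv
  set Rel : Finset ℕ × Set ℕ → Finset ℕ × Set ℕ → Prop := fun σ σ' =>
    ∃ n ∈ σ.2, σ'.1 = insert n σ.1 ∧ σ'.2 ⊆ σ.2 ∩ Ioi n with hRel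
  have step : ∀ σ, Inv σ → ∃ σ', Inv σ' ∧ Rel σ σ' := by
    rintro ⟨N, L⟩ ⟨hLinf, hNM, hLM, hord, hdec⟩
    obtain ⟨n, hnL⟩ := hLinf.nonempty
    have htail : (L ∩ Ioi n).Infinite := tail_infinite hLinf n
    obtain ⟨L', hL'sub, hL'inf, hL'dec⟩ := decide_many S (insert n N).powerset _ htail
    refine ⟨(insert n N, L'), ⟨hL'inf, ?_, ?_, ?_, hL'dec⟩, n, hnL, rfl, hL'sub⟩
    · intro x hx
      simp only [Finset.coe_insert, Set.mem_insert_iff, Finset.mem_coe] at hx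
      rcases hx with rfl | h
      · exact hLM hnL
      · exact hNM h
    · exact fun x hx => hLM (hL'sub hx).1
    · intro x hx m hm
      rcases Finset.mem_insert.1 hm with rfl | hm
      · exact (hL'sub hx).2
      · exact hord x (hL'sub hx).1 m hm
  -- initial state : decide ∅
  obtain ⟨L₀, hL₀M, hL₀inf, hL₀dec⟩ := decide_many S ({∅} : Finset (Finset ℕ)) M hM
  have inv₀ : Inv (∅, L₀) := by
    refine ⟨hL₀inf, by simp, hL₀M, by simp, ?_⟩
    intro s hs
    rw [Finset.mem_powerset, Finset.subset_empty] at hs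
    subst hs
    exact hL₀dec ∅ (Finset.mem_singleton_self _)
  obtain ⟨f, hf0, hfInv, hfRel⟩ := chain_exists Inv Rel (∅, L₀) inv₀ step
  -- the fused set
  set L : Set ℕ := ⋃ i, ((f i).1 : Set ℕ) with hLdef
  have hNmono : ∀ i j, i ≤ j → (f i).1 ⊆ (f j).1 := by
    intro i j hij
    induction j, hij using Nat.le_induction with
    | base => exact Finset.Subset.refl _
    | succ j hij ih =>
      obtain ⟨n, _, heq, _⟩ := hfRel j
      rw [heq]
      exact ih.trans (Finset.subset_insert _ _)
  have hLmono : ∀ i j, i ≤ j → (f j).2 ⊆ (f i).2 := by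
    intro i j hij
    induction j, hij using Nat.le_induction with
    | base => exact subset_rfl
    | succ j hij ih =>
      obtain ⟨n, _, _, hsub⟩ := hfRel j
      exact (hsub.trans inter_subset_left).trans ih
  have hcard : ∀ i, i ≤ (f i).1.card := by
    intro i
    induction i with
    | zero => simp
    | succ i ih =>
      obtain ⟨n, hn, heq, _⟩ := hfRel i
      have hnotmem : n ∉ (f i).1 := fun h => lt_irrefl n ((hfInv i).2.2.2.1 n hn n h)
      rw [heq, Finset.card_insert_of_notMem hnotmem]
      omega
  have hLM : L ⊆ M := by
    rintro x hx
    obtain ⟨i, hi⟩ := mem_iUnion.1 hx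
    exact (hfInv i).2.1 hi
  have hLinf : L.Infinite := by
    intro hfin
    have hsub : ∀ i, (f i).1 ⊆ hfin.toFinset := by
      intro i x hx
      exact hfin.mem_toFinset.2 (mem_iUnion.2 ⟨i, hx⟩)
    have := Finset.card_le_card (hsub (hfin.toFinset.card + 1))
    have := hcard (hfin.toFinset.card + 1)
    omega
  -- points not in stage i lie in the reservoir of stage i
  have hres : ∀ i, ∀ x ∈ L, x ∉ (f i).1 → x ∈ (f i).2 := by
    intro i x hx hxn
    obtain ⟨j, hj⟩ := mem_iUnion.1 hx
    clear hx
    induction j with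
    | zero => rw [hf0] at hj; simp at hj
    | succ j ih =>
      obtain ⟨n, hn, heq, _⟩ := hfRel j
      rw [heq] at hj
      rcases Finset.mem_insert.1 hj with rfl | hj
      · rcases le_or_gt (j + 1) i with h | h
        · exact absurd (hNmono (j+1) i h (heq ▸ Finset.mem_insert_self _ _)) hxn
        · exact hLmono i j (by omega) hn
      · exact ih hj
  refine ⟨L, hLM, hLinf, ?_⟩
  intro s hsL c hsc
  -- find the last stage all of whose points are ≤ c
  have hgood0 : ∀ m ∈ (f 0).1, m ≤ c := by rw [hf0]; simp
  have hbdd : ∀ i, (∀ m ∈ (f i).1, m ≤ c) → i ≤ c + 1 := by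
    intro i hi
    have : (f i).1 ⊆ Finset.range (c + 1) := fun m hm => Finset.mem_range.2 (by
      have := hi m hm; omega)
    have h1 := Finset.card_le_card this
    have h2 := hcard i
    rw [Finset.card_range] at h1
    omega
  -- i* := greatest good stage
  obtain ⟨istar, histar, hmax⟩ : ∃ i, (∀ m ∈ (f i).1, m ≤ c) ∧
      ¬ (∀ m ∈ (f (i+1)).1, m ≤ c) := by
    by_contra hcon
    push_neg at hcon
    have : ∀ i, ∀ m ∈ (f i).1, m ≤ c := by
      intro i
      induction i with
      | zero => exact hgood0
      | succ i ih => exact hcon i ih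
    have := hbdd (c + 2) (this (c + 2))
    omega
  -- the point added at stage i* exceeds c
  obtain ⟨nstar, hnstar, heqstar, hsubstar⟩ := hfRel istar
  have hnstarc : c < nstar := by
    by_contra h
    push_neg at h
    refine hmax ?_
    intro m hm
    rw [heqstar] at hm
    rcases Finset.mem_insert.1 hm with rfl | hm
    · exact h
    · exact histar m hm
  -- every point of L is in stage i* or exceeds c
  have hsplit : ∀ x ∈ L, x ∈ (f istar).1 ∨ c < x := by
    intro x hx
    by_cases hxn : x ∈ (f istar).1
    · exact Or.inl hxn
    · right
      have hxres := hres istar x hx hxn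
      -- reservoir at i* : could still be ≤ c? points of reservoir are > all chosen pts;
      -- need: x ∈ (f istar).2 with x ∉ (f istar).1 and x ∈ L: if x ≤ c?
      -- x ∈ L means x ∈ some (f j).1 : if j ≤ istar then x ∈ (f istar).1 contra.
      -- else x added at stage ≥ istar, so x = nstar (> c) or x in reservoir of istar+1,
      -- which consists of numbers > nstar > c.
      obtain ⟨j, hj⟩ := mem_iUnion.1 hx
      rcases le_or_gt j istar with h | h
      · exact absurd (hNmono j istar h hj) hxn
      · -- istar + 1 ≤ j
        by_cases hx1 : x ∈ (f (istar + 1)).1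
        · rw [heqstar] at hx1
          rcases Finset.mem_insert.1 hx1 with rfl | hx1
          · exact hnstarc
          · exact absurd hx1 hxn
        · have := hres (istar + 1) x hx hx1
          have hx2 := hsubstar this
          exact hnstarc.trans hx2.2
  -- s ⊆ stage i*
  have hsstage : s ⊆ (f istar).1 := by
    intro x hx
    rcases hsplit x (hsL hx) with h | h
    · exact h
    · exact absurd (hsc x hx) (by omega)
  -- tail of L beyond c lies in the reservoir of i*
  have htails : L ∩ Ioi c ⊆ (f istar).2 := by
    rintro x ⟨hx1, hx2⟩
    refine hres istar x hx1 ?_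
    intro hmem
    exact absurd (histar x hmem) (by simp at hx2; omega)
  rcases (hfInv istar).2.2.2.2 s (Finset.mem_powerset.2 hsstage) with h | h
  · exact Or.inl (acc_mono htails h)
  · exact Or.inr (rej_mono htails h)

end NWAux
namespace NWAux
open Set

lemma bad_finite (S : Set (Finset ℕ)) (L₁ : Set ℕ) (s : Finset ℕ)
    (hrej : ∀ c, (∀ m ∈ s, m ≤ c) → rej S s (L₁ ∩ Ioi c)) :
    {n | n ∈ L₁ ∧ (∀ m ∈ s, m < n) ∧ acc S (insert n s) (L₁ ∩ Ioi n)}.Finite := by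
  set B := {n | n ∈ L₁ ∧ (∀ m ∈ s, m < n) ∧ acc S (insert n s) (L₁ ∩ Ioi n)} with hB
  by_contra hinf
  replace hinf : B.Infinite := hinf
  obtain ⟨c₀, hc₀⟩ := finset_bound s
  have hB'inf : (B ∩ Ioi c₀).Infinite := tail_infinite hinf c₀
  have hB'sub : B ∩ Ioi c₀ ⊆ L₁ ∩ Ioi c₀ := fun x hx => ⟨hx.1.1, hx.2⟩
  refine hrej c₀ hc₀ (B ∩ Ioi c₀) hB'sub hB'inf ?_
  intro N hN hNinf helt
  have hNne : N.Nonempty := hNinf.nonempty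
  set n₀ := sInf N with hn₀def
  have hn₀N : n₀ ∈ N := Nat.sInf_mem hNne
  have hn₀B : n₀ ∈ B := (hN hn₀N).1
  set N' := N \ {n₀} with hN'def
  have hN'inf : N'.Infinite := hNinf.diff (finite_singleton n₀)
  have hN'sub : N' ⊆ L₁ ∩ Ioi n₀ := by
    rintro x ⟨hx1, hx2⟩
    refine ⟨(hN hx1).1.1, ?_⟩
    have := Nat.sInf_le hx1
    simp only [mem_singleton_iff] at hx2
    simp only [mem_Ioi]
    omega
  have helt' : ∀ x ∈ N', ∀ m ∈ insert n₀ s, m < x := by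
    rintro x ⟨hx1, hx2⟩ m hm
    simp only [mem_singleton_iff] at hx2
    have hxn₀ : n₀ < x := by have := Nat.sInf_le hx1; omega
    rcases Finset.mem_insert.1 hm with rfl | hm
    · exact hxn₀
    · exact (hn₀B.2.1 m hm).trans hxn₀
  obtain ⟨t, htS, htseg⟩ := hn₀B.2.2 N' hN'sub hN'inf helt'
  refine ⟨t, htS, ?_⟩
  have : (↑(insert n₀ s) : Set ℕ) ∪ N' = ↑s ∪ N := by
    ext x
    simp only [Finset.coe_insert, Set.mem_insert_iff, mem_union, mem_diff,
      mem_singleton_iff, Finset.mem_coe]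
    constructor
    · rintro (⟨rfl | h⟩ | ⟨h, _⟩)
      · exact Or.inr hn₀N
      · exact Or.inl h
      · exact Or.inr h
    · rintro (h | h)
      · exact Or.inl (Or.inr h)
      · by_cases hx : x = n₀
        · exact Or.inl (Or.inl hx)
        · exact Or.inr ⟨h, hx⟩
  rwa [this] at htseg

lemma thinning (S : Set (Finset ℕ)) (L₁ : Set ℕ) (hL₁ : L₁.Infinite)
    (hdich : ∀ s : Finset ℕ, ↑s ⊆ L₁ → ∀ c, (∀ m ∈ s, m ≤ c) →
      acc S s (L₁ ∩ Ioi c) ∨ rej S s (L₁ ∩ Ioi c))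
    (hrej0 : rej S ∅ L₁) :
    ∃ L₂, L₂ ⊆ L₁ ∧ L₂.Infinite ∧ ∀ s : Finset ℕ, ↑s ⊆ L₂ → ∀ c, (∀ m ∈ s, m ≤ c) →
      rej S s (L₁ ∩ Ioi c) := by
  classical
  set Inv : Finset ℕ → Prop := fun τ =>
    ↑τ ⊆ L₁ ∧ ∀ s ∈ τ.powerset, ∀ c, (∀ m ∈ s, m ≤ c) → rej S s (L₁ ∩ Ioi c) with hInv
  set Rel : Finset ℕ → Finset ℕ → Prop := fun τ τ' =>
    ∃ m ∈ L₁, (∀ x ∈ τ, x < m) ∧ τ' = insert m τ with hRel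
  have step : ∀ τ, Inv τ → ∃ τ', Inv τ' ∧ Rel τ τ' := by
    intro τ ⟨hτL, hτrej⟩
    set Bad : Set ℕ := ⋃ s ∈ τ.powerset,
      {n | n ∈ L₁ ∧ (∀ m ∈ s, m < n) ∧ acc S (insert n s) (L₁ ∩ Ioi n)} with hBad
    have hBadfin : Bad.Finite := by
      refine Set.Finite.biUnion (τ.powerset : Finset (Finset ℕ)).finite_toSet ?_
      intro s hs
      exact bad_finite S L₁ s (hτrej s hs)
    obtain ⟨b, hb⟩ := hBadfin.bddAbove
    set b₁ := τ.sup id with hb₁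
    obtain ⟨m, hmL, hmgt⟩ := hL₁.exists_gt (max b b₁)
    have hmBad : m ∉ Bad := fun h => by
      have := hb h
      simp only [max_lt_iff] at hmgt
      omega
    have hmτ : ∀ x ∈ τ, x < m := by
      intro x hx
      have : x ≤ b₁ := Finset.le_sup (f := id) hx
      simp only [max_lt_iff] at hmgt
      omega
    refine ⟨insert m τ, ⟨?_, ?_⟩, m, hmL, hmτ, rfl⟩
    · intro x hx
      simp only [Finset.coe_insert, Set.mem_insert_iff, Finset.mem_coe] at hx
      rcases hx with rfl | h
      · exact hmL
      · exact hτL h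
    · intro s' hs' c hc
      rw [Finset.mem_powerset] at hs'
      by_cases hms' : m ∈ s'
      · set s := s'.erase m with hsdef
        have hsτ : s ⊆ τ := by
          intro x hx
          rcases Finset.mem_insert.1 (hs' (Finset.mem_of_mem_erase hx)) with rfl | h
          · exact absurd rfl (Finset.ne_of_mem_erase hx)
          · exact h
        have hs'eq : s' = insert m s := (Finset.insert_erase hms').symm
        have hsm : ∀ x ∈ s, x < m := fun x hx => hmτ x (hsτ hx)
        have hcm : m ≤ c := hc m hms'
        have hrejm : rej S s' (L₁ ∩ Ioi m) := by
          have hs'L : ↑s' ⊆ L₁ := by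
            intro x hx
            rcases Finset.mem_insert.1 (hs' hx) with rfl | h
            · exact hmL
            · exact hτL h
          have hs'bd : ∀ x ∈ s', x ≤ m := by
            intro x hx
            rcases Finset.mem_insert.1 (hs' hx) with rfl | h
            · exact le_refl _
            · exact (hmτ x h).le
          rcases hdich s' hs'L m hs'bd with hacc | hrej
          · exfalso
            refine hmBad ?_
            rw [hBad]
            refine mem_biUnion (Finset.mem_powerset.2 hsτ) ?_
            refine ⟨hmL, hsm, ?_⟩
            rwa [hs'eq] at hacc
          · exact hrej
        refine rej_mono ?_ hrejm
        rintro x ⟨hx1, hx2⟩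
        simp only [mem_Ioi] at hx2
        exact ⟨hx1, by simp only [mem_Ioi]; omega⟩
      · have : s' ⊆ τ := fun x hx => by
          rcases Finset.mem_insert.1 (hs' hx) with rfl | h
          · exact absurd hx hms'
          · exact h
        exact hτrej s' (Finset.mem_powerset.2 this) c hc
  have inv₀ : Inv ∅ := by
    refine ⟨by simp, ?_⟩
    intro s hs c _
    rw [Finset.mem_powerset, Finset.subset_empty] at hs
    subst hs
    exact rej_mono inter_subset_left hrej0
  obtain ⟨f, hf0, hfInv, hfRel⟩ := chain_exists Inv Rel ∅ inv₀ step
  set L₂ : Set ℕ := ⋃ i, ((f i) : Set ℕ) with hL₂def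
  have hmono : ∀ i j, i ≤ j → f i ⊆ f j := by
    intro i j hij
    induction j, hij using Nat.le_induction with
    | base => exact Finset.Subset.refl _
    | succ j hij ih =>
      obtain ⟨m, _, _, heq⟩ := hfRel j
      rw [heq]
      exact ih.trans (Finset.subset_insert _ _)
  have hcard : ∀ i, i ≤ (f i).card := by
    intro i
    induction i with
    | zero => simp
    | succ i ih =>
      obtain ⟨m, _, hmgt, heq⟩ := hfRel i
      have : m ∉ f i := fun h => lt_irrefl m (hmgt m h)
      rw [heq, Finset.card_insert_of_notMem this]
      omega
  have hL₂L₁ : L₂ ⊆ L₁ := by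
    rintro x hx
    obtain ⟨i, hi⟩ := mem_iUnion.1 hx
    exact (hfInv i).1 hi
  have hL₂inf : L₂.Infinite := by
    intro hfin
    have hsub : ∀ i, f i ⊆ hfin.toFinset := fun i x hx =>
      hfin.mem_toFinset.2 (mem_iUnion.2 ⟨i, hx⟩)
    have := Finset.card_le_card (hsub (hfin.toFinset.card + 1))
    have := hcard (hfin.toFinset.card + 1)
    omega
  refine ⟨L₂, hL₂L₁, hL₂inf, ?_⟩
  intro s hsL₂ c hc
  have hstage : ∃ i, s ⊆ f i := by
    classical
    induction s using Finset.induction_on with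
    | empty => exact ⟨0, Finset.empty_subset _⟩
    | insert _ _ ha ih =>
      rename_i a s'
      have hsub : (↑s' : Set ℕ) ⊆ L₂ := fun x hx =>
        hsL₂ (by simp only [Finset.coe_insert, Set.mem_insert_iff]; exact Or.inr hx)
      obtain ⟨i₁, hi₁⟩ := ih (fun x hx => hsub hx) (fun m hm => hc m (Finset.mem_insert_of_mem hm))
      have haL₂ : a ∈ L₂ := hsL₂ (by simp)
      obtain ⟨i₂, hi₂⟩ := mem_iUnion.1 haL₂
      refine ⟨max i₁ i₂, Finset.insert_subset ?_ ?_⟩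
      · exact hmono i₂ _ (le_max_right _ _) hi₂
      · exact hi₁.trans (hmono i₁ _ (le_max_left _ _))
  obtain ⟨i, hi⟩ := hstage
  exact (hfInv i).2 s (Finset.mem_powerset.2 hi) c hc

end NWAux
namespace NWAux
open Set

/-- The Nash–Williams dichotomy for a thin family. -/
lemma nash_williams (F : Set (Finset ℕ)) (hF : Thin F) (A : Set (Finset ℕ)) (hA : A ⊆ F)
    (M : Set ℕ) (hM : M.Infinite) :
    ∃ L, L ⊆ M ∧ L.Infinite ∧
      (restrict F L ⊆ A ∨ ∀ t ∈ A, ¬ (↑t : Set ℕ) ⊆ L) := by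
  by_cases hacc : ∃ L', L' ⊆ M ∧ L'.Infinite ∧ acc A ∅ L'
  · obtain ⟨L, hLM, hLinf, hLacc⟩ := hacc
    refine ⟨L, hLM, hLinf, Or.inl ?_⟩
    rintro s ⟨hsF, hsL⟩
    obtain ⟨c₀, hc₀⟩ := finset_bound s
    set N : Set ℕ := ↑s ∪ (L ∩ {x | ∀ m ∈ s, m < x}) with hNdef
    have hNL : N ⊆ L := union_subset hsL inter_subset_left
    have hNinf : N.Infinite := by
      refine Set.Infinite.mono ?_ (tail_infinite hLinf c₀)
      rintro x ⟨hx1, hx2⟩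
      simp only [mem_Ioi] at hx2
      exact Or.inr ⟨hx1, fun m hm => by have := hc₀ m hm; omega⟩
    obtain ⟨t, htA, htseg⟩ := hLacc N hNL hNinf (by simp)
    rw [show ((↑(∅ : Finset ℕ) : Set ℕ) ∪ N) = N by simp] at htseg
    have hsseg : InitSegOfInf s N := by
      refine ⟨subset_union_left, ?_⟩
      intro a ha b hb hab
      rcases ha with ha | ⟨_, ha2⟩
      · exact Finset.mem_coe.1 ha
      · exact absurd hab (by have := ha2 b hb; omega)
    have := thin_initSeg_eq hF hsF (hA htA) hsseg htseg
    rwa [this]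
  · have hrej : rej A ∅ M := fun L' h1 h2 h3 => hacc ⟨L', h1, h2, h3⟩
    obtain ⟨L₁, hL₁M, hL₁inf, hdich⟩ := fusion A M hM
    obtain ⟨L₂, hL₂L₁, hL₂inf, hrej2⟩ := thinning A L₁ hL₁inf hdich (rej_mono hL₁M hrej)
    refine ⟨L₂, hL₂L₁.trans hL₁M, hL₂inf, Or.inr ?_⟩
    intro t htA htL₂
    obtain ⟨c, hc⟩ := finset_bound t
    refine hrej2 t htL₂ c hc (L₁ ∩ Ioi c) subset_rfl (tail_infinite hL₁inf c) ?_
    intro N _ _ helt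
    refine ⟨t, htA, subset_union_left, ?_⟩
    intro a ha b hb hab
    rcases ha with ha | ha
    · exact Finset.mem_coe.1 ha
    · exact absurd hab (by have := helt a ha b hb; omega)

lemma ramsey_aux : ∀ k (F : Set (Finset ℕ)), Thin F → ∀ P : Fin (k + 1) → Set (Finset ℕ),
    F ⊆ ⋃ i, P i → ∀ M : Set ℕ, M.Infinite →
    ∃ L, L ⊆ M ∧ L.Infinite ∧ ∃ i₀, restrict F L ⊆ P i₀ := by
  intro k
  induction k with
  | zero =>
    intro F _ P hsub M hM
    refine ⟨M, subset_rfl, hM, 0, ?_⟩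
    intro s hs
    obtain ⟨i, hi⟩ := mem_iUnion.1 (hsub hs.1)
    rwa [Fin.fin_one_eq_zero i] at hi
  | succ k ih =>
    intro F hF P hsub M hM
    obtain ⟨L, hLM, hLinf, hcase⟩ :=
      nash_williams F hF (F ∩ P 0) inter_subset_left M hM
    rcases hcase with h | h
    · exact ⟨L, hLM, hLinf, 0, fun s hs => (h hs).2⟩
    · have hF' : Thin (restrict F L) := fun s hs t ht => hF s hs.1 t ht.1
      have hsub' : restrict F L ⊆ ⋃ i : Fin (k + 1), P i.succ := by
        rintro s ⟨hsF, hsL⟩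
        obtain ⟨i, hi⟩ := mem_iUnion.1 (hsub hsF)
        rcases Fin.eq_zero_or_eq_succ i with rfl | ⟨j, rfl⟩
        · exact absurd hsL (h s ⟨hsF, hi⟩)
        · exact mem_iUnion.2 ⟨j, hi⟩
      obtain ⟨L', hL'L, hL'inf, i₁, hi₁⟩ :=
        ih (restrict F L) hF' (fun i => P i.succ) hsub' L hLinf
      refine ⟨L', hL'L.trans hLM, hL'inf, i₁.succ, ?_⟩
      rintro s ⟨hsF, hsL'⟩
      exact hi₁ ⟨⟨hsF, hsL'.trans hL'L⟩, hsL'⟩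

end NWAux
/-- If `F` is thin, then for every finite partition `F = F₁ ∪ … ∪ F_k`
(`k ≥ 2`) and every infinite `M ⊆ ℕ` there are an infinite `L ⊆ M` and `i₀` with
`F↾L ⊆ F_{i₀}`. -/
theorem thin_partition_ramsey (F : Set (Finset ℕ)) (hF : Thin F)
    (k : ℕ) (hk : 2 ≤ k) (P : Fin k → Set (Finset ℕ)) (hcover : F = ⋃ i, P i)
    (M : Set ℕ) (hM : M.Infinite) :
    ∃ L : Set ℕ, L ⊆ M ∧ L.Infinite ∧ ∃ i₀ : Fin k, restrict F L ⊆ P i₀ := by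
  obtain ⟨k', rfl⟩ : ∃ k', k = k' + 1 := ⟨k - 1, by omega⟩
  exact NWAux.ramsey_aux k' F hF P (hcover ▸ Set.Subset.rfl) M hM
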